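/- Let 𝔩 be a finite-dimensional Lie algebra with subalgebras 𝔥 and 𝔫 such that 𝔩 = 𝔥 ⊕ 𝔫 as vector spaces. Then the subspace (∧𝔫*)^𝔥 of 𝔥-invariant elements of ∧𝔫* is invariant under the Chevalley–Eilenberg coboundary operator d_𝔫 of the Lie algebra 𝔫, even though the action of 𝔥 on 𝔫 need not be by Lie algebra derivations. -/

import Mathlib

/-- Skipping two indices `i < j`. -/
def skip2 (i j m : ℕ) : ℕ := if m < i then m else if m + 1 < j then m + 1 else m + 2

theorem skip2_le (i j m : ℕ) : skip2 i j m ≤ m + 2 := by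
  unfold skip2; split_ifs <;> omega

/-- The Chevalley–Eilenberg differential with trivial coefficients on `k`-cochains:
`(d g)(a₁,…,a_{k+1}) = Σ_{i<j} (−1)^{i+j} g([a_i,a_j], a₁,…,â_i,…,â_j,…,a_{k+1})`. -/
noncomputable def ceDiff (K : Type*) [Field K] {M : Type*} [LieRing M] (k : ℕ)
    (f : (Fin k → M) → K) : (Fin (k + 1) → M) → K :=
  fun a => ∑ i : Fin (k + 1), ∑ j : Fin (k + 1),
    if (i : ℕ) < (j : ℕ) then
      ((-1 : K)) ^ ((i : ℕ) + (j : ℕ)) *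
        f (fun m =>
          if hm : (m : ℕ) = 0 then ⁅a i, a j⁆
          else a ⟨skip2 (i : ℕ) (j : ℕ) ((m : ℕ) - 1), by
            have h1 := skip2_le (i : ℕ) (j : ℕ) ((m : ℕ) - 1)
            have h2 := m.isLt
            omega⟩)
    else 0

def dtup {M : Type*} [LieRing M] (k : ℕ) (a : Fin (k + 1) → M) (i j : Fin (k + 1)) :
    Fin k → M :=
  fun m =>
    if hm : (m : ℕ) = 0 then ⁅a i, a j⁆
    else a ⟨skip2 (i : ℕ) (j : ℕ) ((m : ℕ) - 1), by
      have h1 := skip2_le (i : ℕ) (j : ℕ) ((m : ℕ) - 1)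
      have h2 := m.isLt
      omega⟩

lemma ceDiff_eq (K : Type*) [Field K] {M : Type*} [LieRing M] (k : ℕ)
    (g : (Fin k → M) → K) (a : Fin (k + 1) → M) :
    ceDiff K k g a = ∑ i : Fin (k + 1), ∑ j : Fin (k + 1),
      if (i : ℕ) < (j : ℕ) then ((-1 : K)) ^ ((i : ℕ) + (j : ℕ)) * g (dtup k a i j) else 0 := rfl

lemma dtup_eq_cons {M : Type*} [LieRing M] (k : ℕ) (a : Fin (k + 2) → M) (i j : Fin (k + 2)) :
    dtup (k + 1) a i j = Fin.cons ⁅a i, a j⁆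
      (fun m : Fin k => a ⟨skip2 (i : ℕ) (j : ℕ) (m : ℕ), by
        have h1 := skip2_le (i : ℕ) (j : ℕ) (m : ℕ); have h2 := m.isLt; omega⟩) := by
  funext m
  refine Fin.cases ?_ (fun q => ?_) m
  · simp [dtup]
  · have hq : ((Fin.succ q : Fin (k + 1)) : ℕ) ≠ 0 := by simp
    simp only [dtup, hq, dif_neg, Fin.cons_succ, Fin.val_succ, Nat.add_sub_cancel]
    exact dif_neg (by omega)

section MapLemmas
variable {K : Type*} [Field K] {M : Type*} [AddCommGroup M] [Module K M] {k : ℕ}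

lemma map_cons_add (g : AlternatingMap K M K (Fin (k + 1))) (a b : M) (v : Fin k → M) :
    g (Fin.cons (a + b) v) = g (Fin.cons a v) + g (Fin.cons b v) := by
  have h1 : Fin.cons (a + b) v = Function.update (Fin.cons a v : Fin (k+1) → M) 0 (a + b) :=
    by rw [Fin.update_cons_zero]
  rw [h1, g.map_update_add]
  simp [Fin.update_cons_zero]

lemma map_cons_sub (g : AlternatingMap K M K (Fin (k + 1))) (a b : M) (v : Fin k → M) :
    g (Fin.cons (a - b) v) = g (Fin.cons a v) - g (Fin.cons b v) := by
  have h1 : Fin.cons (a - b) v = Function.update (Fin.cons a v : Fin (k+1) → M) 0 (a - b) :=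
    by rw [Fin.update_cons_zero]
  rw [h1, g.map_update_sub]
  simp [Fin.update_cons_zero]

lemma map_cons_removeNth (g : AlternatingMap K M K (Fin (k + 1))) (v : Fin (k + 1) → M)
    (q : Fin (k + 1)) (b : M) :
    g (Fin.cons b (q.removeNth v)) = (-1 : K) ^ (q : ℕ) * g (Function.update v q b) := by
  have h1 : Fin.cons b (q.removeNth v) = (Function.update v q b) ∘ ⇑(q.cycleRange.symm) := by
    funext r
    refine Fin.cases ?_ (fun m => ?_) r
    · simp only [Fin.cons_zero, Function.comp_apply]
      rw [Fin.cycleRange_symm_zero]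
      simp
    · simp only [Fin.cons_succ, Function.comp_apply, Fin.removeNth]
      rw [Fin.cycleRange_symm_succ, Function.update_of_ne (Fin.succAbove_ne _ _)]
  rw [h1]
  have h2 := g.map_perm (Function.update v q b) (q.cycleRange.symm : Equiv.Perm (Fin (k + 1)))
  rw [show ⇑(q.cycleRange.symm) = ((q.cycleRange.symm : Equiv.Perm (Fin (k+1))) : Fin (k+1) → Fin (k+1)) from rfl] at h1 ⊢
  rw [h2, Equiv.Perm.sign_symm, Fin.sign_cycleRange]
  rcases Int.units_eq_one_or ((-1 : ℤˣ) ^ (q : ℕ)) with hu | hu <;>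
    rcases Nat.even_or_odd (q : ℕ) with hpar | hpar <;>
      simp_all [Units.smul_def, hpar.neg_one_pow]
end MapLemmas



lemma val_succAbove {m : ℕ} (p : Fin (m + 1)) (t : Fin m) :
    ((p.succAbove t : Fin (m + 1)) : ℕ) = if (t : ℕ) < (p : ℕ) then (t : ℕ) else (t : ℕ) + 1 := by
  rcases lt_or_ge (Fin.castSucc t) p with hlt | hle
  · rw [Fin.succAbove_of_castSucc_lt _ _ hlt, Fin.coe_castSucc, if_pos]
    simpa [Fin.lt_def] using hlt
  · rw [Fin.succAbove_of_le_castSucc _ _ hle, Fin.val_succ, if_neg]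
    simp only [Fin.le_def, Fin.coe_castSucc] at hle
    omega

lemma skip2F_eq_right {k : ℕ} (i j : Fin (k + 2)) (hij : (i : ℕ) < (j : ℕ)) (m : Fin k) :
    (⟨skip2 i j m, by have := skip2_le (i : ℕ) (j : ℕ) (m : ℕ); have := m.isLt; omega⟩ : Fin (k + 2))
      = j.succAbove ((⟨(i : ℕ), by have := j.isLt; omega⟩ : Fin (k + 1)).succAbove m) := by
  apply Fin.ext
  simp only [val_succAbove, Fin.val_mk]
  unfold skip2
  split_ifs <;> omega

lemma skip2F_eq_left {k : ℕ} (i j : Fin (k + 2)) (hij : (i : ℕ) < (j : ℕ)) (m : Fin k) :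
    (⟨skip2 i j m, by have := skip2_le (i : ℕ) (j : ℕ) (m : ℕ); have := m.isLt; omega⟩ : Fin (k + 2))
      = i.succAbove ((⟨(j : ℕ) - 1, by have := j.isLt; omega⟩ : Fin (k + 1)).succAbove m) := by
  apply Fin.ext
  simp only [val_succAbove, Fin.val_mk]
  unfold skip2
  split_ifs <;> omega

lemma succAbove_left {k : ℕ} (i j : Fin (k + 2)) (hij : (i : ℕ) < (j : ℕ)) :
    j.succAbove (⟨(i : ℕ), by have := j.isLt; omega⟩ : Fin (k + 1)) = i := by
  apply Fin.ext; simp only [val_succAbove, Fin.val_mk]; split_ifs <;> omega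

lemma succAbove_right {k : ℕ} (i j : Fin (k + 2)) (hij : (i : ℕ) < (j : ℕ)) :
    i.succAbove (⟨(j : ℕ) - 1, by have := j.isLt; omega⟩ : Fin (k + 1)) = j := by
  apply Fin.ext; simp only [val_succAbove, Fin.val_mk]; split_ifs <;> omega


lemma neg_one_pow_helper {K : Type*} [Field K] (a b : ℕ) :
    (-1 : K) ^ (a + b) * (-1 : K) ^ a = (-1 : K) ^ b := by
  have : (-1 : K) ^ (a + b) * (-1 : K) ^ a = ((-1 : K) ^ a * (-1 : K) ^ a) * (-1 : K) ^ b := by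
    rw [pow_add]; ring
  rw [this, ← mul_pow]
  norm_num

lemma step3 {K : Type*} [Field K] (k : ℕ) (H : Fin (k + 2) → Fin (k + 1) → K)
    (hH : ∀ r, ∑ q : Fin (k + 1), H r q = 0) :
    ∑ i : Fin (k + 2), ∑ j : Fin (k + 2),
      (if hij : (i : ℕ) < (j : ℕ) then
        (-1 : K) ^ ((i : ℕ) + (j : ℕ)) *
          ((-1 : K) ^ (i : ℕ) * H j ⟨(i : ℕ), by have := j.isLt; omega⟩
            - (-1 : K) ^ ((j : ℕ) - 1) * H i ⟨(j : ℕ) - 1, by have := j.isLt; omega⟩)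
       else 0) = 0 := by
  classical
  set P : Fin (k + 2) × Fin (k + 1) → K := fun rq => (-1 : K) ^ ((rq.1 : ℕ)) * H rq.1 rq.2
    with hP
  have hprod : ∑ rq ∈ (Finset.univ ×ˢ Finset.univ : Finset (Fin (k + 2) × Fin (k + 1))),
      P rq = 0 := by
    rw [Finset.sum_product]
    refine Finset.sum_eq_zero fun r _ => ?_
    rw [hP]
    simp only
    rw [← Finset.mul_sum, hH r, mul_zero]
  -- split the dite into two sums
  have hsplit : ∑ i : Fin (k + 2), ∑ j : Fin (k + 2),
      (if hij : (i : ℕ) < (j : ℕ) then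
        (-1 : K) ^ ((i : ℕ) + (j : ℕ)) *
          ((-1 : K) ^ (i : ℕ) * H j ⟨(i : ℕ), by have := j.isLt; omega⟩
            - (-1 : K) ^ ((j : ℕ) - 1) * H i ⟨(j : ℕ) - 1, by have := j.isLt; omega⟩)
       else 0)
      = (∑ ij ∈ (Finset.univ ×ˢ Finset.univ : Finset (Fin (k + 2) × Fin (k + 2))),
          (if hij : (ij.1 : ℕ) < (ij.2 : ℕ) then
            (-1 : K) ^ ((ij.1 : ℕ) + (ij.2 : ℕ)) *
              ((-1 : K) ^ (ij.1 : ℕ) * H ij.2 ⟨(ij.1 : ℕ), by have := ij.2.isLt; omega⟩)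
           else 0))
        - (∑ ij ∈ (Finset.univ ×ˢ Finset.univ : Finset (Fin (k + 2) × Fin (k + 2))),
          (if hij : (ij.1 : ℕ) < (ij.2 : ℕ) then
            (-1 : K) ^ ((ij.1 : ℕ) + (ij.2 : ℕ)) *
              ((-1 : K) ^ ((ij.2 : ℕ) - 1) * H ij.1 ⟨(ij.2 : ℕ) - 1, by have := ij.2.isLt; omega⟩)
           else 0)) := by
    rw [← Finset.sum_sub_distrib, Finset.sum_product]
    refine Finset.sum_congr rfl fun i _ => Finset.sum_congr rfl fun j _ => ?_
    simp only
    by_cases hij : (i : ℕ) < (j : ℕ)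
    · rw [dif_pos hij, dif_pos hij, dif_pos hij]
      ring
    · rw [dif_neg hij, dif_neg hij, dif_neg hij]
      ring
  rw [hsplit]
  -- first sum: bijection with pairs (r, q), q < r
  have h1 : (∑ ij ∈ (Finset.univ ×ˢ Finset.univ : Finset (Fin (k + 2) × Fin (k + 2))),
        (if hij : (ij.1 : ℕ) < (ij.2 : ℕ) then
          (-1 : K) ^ ((ij.1 : ℕ) + (ij.2 : ℕ)) *
            ((-1 : K) ^ (ij.1 : ℕ) * H ij.2 ⟨(ij.1 : ℕ), by have := ij.2.isLt; omega⟩)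
         else 0))
      = ∑ rq ∈ (Finset.univ ×ˢ Finset.univ :
          Finset (Fin (k + 2) × Fin (k + 1))).filter (fun rq => (rq.2 : ℕ) < (rq.1 : ℕ)), P rq := by
    rw [← Finset.sum_filter_add_sum_filter_not _ (fun ij => (ij.1 : ℕ) < (ij.2 : ℕ))]
    have hz : ∑ ij ∈ (Finset.univ ×ˢ Finset.univ :
        Finset (Fin (k + 2) × Fin (k + 2))).filter (fun ij => ¬ (ij.1 : ℕ) < (ij.2 : ℕ)),
        (if hij : (ij.1 : ℕ) < (ij.2 : ℕ) then
          (-1 : K) ^ ((ij.1 : ℕ) + (ij.2 : ℕ)) *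
            ((-1 : K) ^ (ij.1 : ℕ) * H ij.2 ⟨(ij.1 : ℕ), by have := ij.2.isLt; omega⟩)
         else 0) = 0 := by
      refine Finset.sum_eq_zero fun ij hij => ?_
      rw [Finset.mem_filter] at hij
      rw [dif_neg hij.2]
    rw [hz, add_zero]
    refine Finset.sum_nbij' (fun ij => (ij.2, ⟨min (ij.1 : ℕ) k, by omega⟩))
      (fun rq => (Fin.castSucc rq.2, rq.1)) ?_ ?_ ?_ ?_ ?_
    · intro ij hij
      rw [Finset.mem_filter] at hij ⊢
      refine ⟨Finset.mem_product.mpr ⟨Finset.mem_univ _, Finset.mem_univ _⟩, ?_⟩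
      have h2 := ij.2.isLt
      have := hij.2
      simp only [Fin.val_mk]
      omega
    · intro rq hrq
      rw [Finset.mem_filter] at hrq ⊢
      refine ⟨Finset.mem_product.mpr ⟨Finset.mem_univ _, Finset.mem_univ _⟩, ?_⟩
      simpa using hrq.2
    · intro ij hij
      rw [Finset.mem_filter] at hij
      have h2 := ij.2.isLt
      have := hij.2
      ext
      · simp only [Fin.coe_castSucc, Fin.val_mk]; omega
      · rfl
    · intro rq hrq
      rw [Finset.mem_filter] at hrq
      have := rq.2.isLt
      ext
      · rfl
      · simp only [Fin.val_mk, Fin.coe_castSucc]; omega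
    · intro ij hij
      rw [Finset.mem_filter] at hij
      have hlt := hij.2
      rw [dif_pos hlt, hP]
      simp only
      have hfe : (⟨(ij.1 : ℕ), by have := ij.2.isLt; omega⟩ : Fin (k + 1))
          = ⟨min (ij.1 : ℕ) k, by omega⟩ := by
        ext
        have := ij.2.isLt
        simp only [Fin.val_mk]
        omega
      rw [← hfe, ← mul_assoc, neg_one_pow_helper]
  -- second sum: bijection with pairs (r, q), ¬ q < r
  have h2 : (∑ ij ∈ (Finset.univ ×ˢ Finset.univ : Finset (Fin (k + 2) × Fin (k + 2))),
        (if hij : (ij.1 : ℕ) < (ij.2 : ℕ) then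
          (-1 : K) ^ ((ij.1 : ℕ) + (ij.2 : ℕ)) *
            ((-1 : K) ^ ((ij.2 : ℕ) - 1) * H ij.1 ⟨(ij.2 : ℕ) - 1, by have := ij.2.isLt; omega⟩)
         else 0))
      = ∑ rq ∈ (Finset.univ ×ˢ Finset.univ :
          Finset (Fin (k + 2) × Fin (k + 1))).filter (fun rq => ¬ (rq.2 : ℕ) < (rq.1 : ℕ)),
          (- P rq) := by
    rw [← Finset.sum_filter_add_sum_filter_not _ (fun ij => (ij.1 : ℕ) < (ij.2 : ℕ))]
    have hz : ∑ ij ∈ (Finset.univ ×ˢ Finset.univ :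
        Finset (Fin (k + 2) × Fin (k + 2))).filter (fun ij => ¬ (ij.1 : ℕ) < (ij.2 : ℕ)),
        (if hij : (ij.1 : ℕ) < (ij.2 : ℕ) then
          (-1 : K) ^ ((ij.1 : ℕ) + (ij.2 : ℕ)) *
            ((-1 : K) ^ ((ij.2 : ℕ) - 1) * H ij.1 ⟨(ij.2 : ℕ) - 1, by have := ij.2.isLt; omega⟩)
         else 0) = 0 := by
      refine Finset.sum_eq_zero fun ij hij => ?_
      rw [Finset.mem_filter] at hij
      rw [dif_neg hij.2]
    rw [hz, add_zero]
    refine Finset.sum_nbij' (fun ij => (ij.1, ⟨min ((ij.2 : ℕ) - 1) k, by omega⟩))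
      (fun rq => (rq.1, Fin.succ rq.2)) ?_ ?_ ?_ ?_ ?_
    · intro ij hij
      rw [Finset.mem_filter] at hij ⊢
      refine ⟨Finset.mem_product.mpr ⟨Finset.mem_univ _, Finset.mem_univ _⟩, ?_⟩
      have h3 := ij.2.isLt
      have := hij.2
      simp only [Fin.val_mk]
      omega
    · intro rq hrq
      rw [Finset.mem_filter] at hrq ⊢
      refine ⟨Finset.mem_product.mpr ⟨Finset.mem_univ _, Finset.mem_univ _⟩, ?_⟩
      have := hrq.2
      simp only [Fin.val_succ]
      omega
    · intro ij hij
      rw [Finset.mem_filter] at hij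
      have h3 := ij.2.isLt
      have := hij.2
      ext
      · rfl
      · simp only [Fin.val_succ, Fin.val_mk]; omega
    · intro rq hrq
      rw [Finset.mem_filter] at hrq
      have := rq.2.isLt
      ext
      · rfl
      · simp only [Fin.val_mk, Fin.val_succ]; omega
    · intro ij hij
      rw [Finset.mem_filter] at hij
      have hlt := hij.2
      have h3 := ij.2.isLt
      rw [dif_pos hlt, hP]
      simp only
      have hfe : (⟨(ij.2 : ℕ) - 1, by omega⟩ : Fin (k + 1))
          = ⟨min ((ij.2 : ℕ) - 1) k, by omega⟩ := by
        ext
        simp only [Fin.val_mk]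
        omega
      rw [← hfe]
      have hsign : (-1 : K) ^ ((ij.1 : ℕ) + (ij.2 : ℕ)) * (-1 : K) ^ ((ij.2 : ℕ) - 1)
          = - (-1 : K) ^ (ij.1 : ℕ) := by
        obtain ⟨j', hj'⟩ : ∃ j', (ij.2 : ℕ) = j' + 1 := ⟨(ij.2 : ℕ) - 1, by omega⟩
        rw [hj']
        simp only [Nat.add_sub_cancel]
        have : (-1 : K) ^ ((ij.1 : ℕ) + (j' + 1)) = (-1 : K) ^ (ij.1 : ℕ) * (-1 : K) ^ j' * (-1) := by
          rw [pow_add, pow_add, pow_one]; ring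
        rw [this]
        have h4 : (-1 : K) ^ j' * (-1 : K) ^ j' = 1 := by rw [← mul_pow]; norm_num
        calc (-1 : K) ^ (ij.1 : ℕ) * (-1 : K) ^ j' * (-1) * (-1 : K) ^ j'
            = - ((-1 : K) ^ (ij.1 : ℕ) * ((-1 : K) ^ j' * (-1 : K) ^ j')) := by ring
          _ = - (-1 : K) ^ (ij.1 : ℕ) := by rw [h4, mul_one]
      rw [← mul_assoc, hsign]
      ring
  rw [h1, h2, Finset.sum_neg_distrib, sub_neg_eq_add,
    Finset.sum_filter_add_sum_filter_not, hprod]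

/-- The projection `π_𝔫 : 𝔩 → 𝔫` along `𝔥`, for a vector space decomposition `𝔩 = 𝔥 ⊕ 𝔫`. -/
noncomputable def projN {K : Type*} [Field K] {L : Type*} [LieRing L] [LieAlgebra K L]
    (h n : LieSubalgebra K L) (hc : IsCompl h.toSubmodule n.toSubmodule) (z : L) : n :=
  ⟨(Submodule.linearProjOfIsCompl n.toSubmodule h.toSubmodule hc.symm z : L),
   (Submodule.linearProjOfIsCompl n.toSubmodule h.toSubmodule hc.symm z).2⟩

/-- The action of `x ∈ 𝔩` (in practice `x ∈ 𝔥`) on `𝔫`: `x·ξ = π_𝔫 ⁅x, ξ⁆`. -/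
noncomputable def hAct {K : Type*} [Field K] {L : Type*} [LieRing L] [LieAlgebra K L]
    (h n : LieSubalgebra K L) (hc : IsCompl h.toSubmodule n.toSubmodule)
    (x : L) (ξ : n) : n :=
  projN h n hc ⁅x, (ξ : L)⁆


section Aux
variable {K : Type*} [Field K] {L : Type*} [LieRing L] [LieAlgebra K L]
variable (h n : LieSubalgebra K L) (hc : IsCompl h.toSubmodule n.toSubmodule)

lemma projN_coe (z : L) : (projN h n hc z : L)
    = Submodule.linearProjOfIsCompl n.toSubmodule h.toSubmodule hc.symm z := rfl

lemma projN_add (z w : L) : projN h n hc (z + w) = projN h n hc z + projN h n hc w := by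
  apply Subtype.ext; simp [projN]

lemma projN_sub (z w : L) : projN h n hc (z - w) = projN h n hc z - projN h n hc w := by
  apply Subtype.ext; simp [projN]

lemma projN_of_mem {z : L} (hz : z ∈ n) : (projN h n hc z : L) = z := by
  have : z = ((⟨z, hz⟩ : n.toSubmodule) : L) := rfl
  rw [projN_coe, this]
  exact congrArg Subtype.val (Submodule.projectionOnto_apply_left hc.symm _)

/-- the `𝔥`-component `ξ·x` (up to sign) of `⁅x, ξ⁆`. -/
noncomputable def pH (x : L) (ξ : n) : L := ⁅x, (ξ : L)⁆ - (hAct h n hc x ξ : L)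

lemma pH_mem (x : L) (ξ : n) : pH h n hc x ξ ∈ h := by
  have h1 := Submodule.projection_add_projection_eq_self hc ⁅x, (ξ : L)⁆
  have h2 : pH h n hc x ξ
      = (Submodule.linearProjOfIsCompl h.toSubmodule n.toSubmodule hc ⁅x, (ξ : L)⁆ : L) := by
    rw [pH, hAct, projN_coe, sub_eq_iff_eq_add]; exact h1.symm
  rw [h2]
  exact (Submodule.linearProjOfIsCompl h.toSubmodule n.toSubmodule hc ⁅x, (ξ : L)⁆).2


lemma hAct_defect (x : L) (ξ η : n) :
    ⁅hAct h n hc x ξ, η⁆ + ⁅ξ, hAct h n hc x η⁆ - hAct h n hc x ⁅ξ, η⁆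
      = hAct h n hc (pH h n hc x η) ξ - hAct h n hc (pH h n hc x ξ) η := by
  apply Subtype.ext
  have hmem1 : ⁅((hAct h n hc x η : L)), (ξ : L)⁆ ∈ n :=
    n.lie_mem (hAct h n hc x η).2 ξ.2
  have hmem2 : ⁅((hAct h n hc x ξ : L)), (η : L)⁆ ∈ n :=
    n.lie_mem (hAct h n hc x ξ).2 η.2
  have hrhs : ((hAct h n hc (pH h n hc x η) ξ - hAct h n hc (pH h n hc x ξ) η : n) : L)
      = (projN h n hc ⁅⁅x,(η:L)⁆,(ξ:L)⁆ : L) - ⁅(hAct h n hc x η : L), (ξ:L)⁆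
        - (projN h n hc ⁅⁅x,(ξ:L)⁆,(η:L)⁆ : L) + ⁅(hAct h n hc x ξ : L), (η:L)⁆ := by
    have e1 : hAct h n hc (pH h n hc x η) ξ
        = projN h n hc ⁅⁅x,(η:L)⁆,(ξ:L)⁆ - projN h n hc ⁅(hAct h n hc x η : L), (ξ:L)⁆ := by
      rw [hAct, pH, sub_lie, projN_sub]
    have e2 : hAct h n hc (pH h n hc x ξ) η
        = projN h n hc ⁅⁅x,(ξ:L)⁆,(η:L)⁆ - projN h n hc ⁅(hAct h n hc x ξ : L), (η:L)⁆ := by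
      rw [hAct, pH, sub_lie, projN_sub]
    rw [e1, e2]
    push_cast
    rw [projN_of_mem h n hc hmem1, projN_of_mem h n hc hmem2]
    abel
  rw [hrhs]
  have hjac : projN h n hc ⁅x, (⁅ξ, η⁆ : n)⁆
      = projN h n hc ⁅⁅x,(ξ:L)⁆,(η:L)⁆ - projN h n hc ⁅⁅x,(η:L)⁆,(ξ:L)⁆ := by
    rw [← projN_sub]
    congr 1
    rw [LieSubalgebra.coe_bracket, leibniz_lie, ← lie_skew ((ξ:L)) ⁅x,(η:L)⁆]
    abel
  push_cast
  simp only [hAct]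
  rw [hjac]
  push_cast
  rw [← lie_skew ((ξ:L)) ((projN h n hc ⁅x,(η:L)⁆ : L))]
  abel

end Aux


section Main
variable {K : Type*} [Field K] {L : Type*} [LieRing L] [LieAlgebra K L]
variable (h n : LieSubalgebra K L) (hc : IsCompl h.toSubmodule n.toSubmodule)

lemma pair_sum (k : ℕ) (f : AlternatingMap K n K (Fin (k + 1)))
    (x : L) (hx : x ∈ h)
    (hinv : ∀ x ∈ h, ∀ y : Fin (k + 1) → n,
      ∑ q : Fin (k + 1), f (Function.update y q (hAct h n hc x (y q))) = 0)
    (y : Fin (k + 2) → n) (i j : Fin (k + 2)) (hij : (i : ℕ) < (j : ℕ)) :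
    ∑ p : Fin (k + 2), f (dtup (k + 1) (Function.update y p (hAct h n hc x (y p))) i j)
      = f (Fin.cons (hAct h n hc (pH h n hc x (y j)) (y i))
            ((⟨(i : ℕ), by have := j.isLt; omega⟩ : Fin (k + 1)).removeNth
              (fun q => y (j.succAbove q))))
        - f (Fin.cons (hAct h n hc (pH h n hc x (y i)) (y j))
            ((⟨(i : ℕ), by have := j.isLt; omega⟩ : Fin (k + 1)).removeNth
              (fun q => y (j.succAbove q)))) := by
  have hiltk : (i : ℕ) < k + 1 := by have := j.isLt; omega
  have hjne : j ≠ i := by intro hji; rw [hji] at hij; omega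
  have hine : i ≠ j := fun hh => hjne hh.symm
  set qi : Fin (k + 1) := ⟨(i : ℕ), hiltk⟩ with hqi
  set e : Fin k → Fin (k + 2) := fun m => j.succAbove (qi.succAbove m) with he
  set tl : Fin k → n := fun m => y (e m) with htl
  have hsal : j.succAbove qi = i := succAbove_left i j hij
  have hej : ∀ m, e m ≠ j := fun m => Fin.succAbove_ne j _
  have hei : ∀ m, e m ≠ i := by
    intro m hm
    rw [← hsal] at hm
    exact Fin.succAbove_ne qi m (Fin.succAbove_right_injective hm)
  have heinj : Function.Injective e := fun a b hab =>
    Fin.succAbove_right_injective (Fin.succAbove_right_injective hab)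
  -- identify the summands
  have hdt : ∀ p : Fin (k + 2),
      dtup (k + 1) (Function.update y p (hAct h n hc x (y p))) i j
        = Fin.cons ⁅Function.update y p (hAct h n hc x (y p)) i,
                    Function.update y p (hAct h n hc x (y p)) j⁆
            (fun m => Function.update y p (hAct h n hc x (y p)) (e m)) := by
    intro p
    rw [dtup_eq_cons]
    exact congrArg _ (funext fun m =>
      congrArg (Function.update y p (hAct h n hc x (y p))) (skip2F_eq_right i j hij m))
  have hGi : f (dtup (k + 1) (Function.update y i (hAct h n hc x (y i))) i j)
      = f (Fin.cons ⁅hAct h n hc x (y i), y j⁆ tl) := by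
    rw [hdt i, Function.update_self, Function.update_of_ne hjne]
    exact congrArg f (congrArg _ (funext fun m => Function.update_of_ne (hei m) _ _))
  have hGj : f (dtup (k + 1) (Function.update y j (hAct h n hc x (y j))) i j)
      = f (Fin.cons ⁅y i, hAct h n hc x (y j)⁆ tl) := by
    rw [hdt j, Function.update_self, Function.update_of_ne hine]
    exact congrArg f (congrArg _ (funext fun m => Function.update_of_ne (hej m) _ _))
  have hGe : ∀ m' : Fin k,
      f (dtup (k + 1) (Function.update y (e m') (hAct h n hc x (y (e m')))) i j)
        = f (Fin.cons ⁅y i, y j⁆ (Function.update tl m' (hAct h n hc x (tl m')))) := by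
    intro m'
    rw [hdt (e m'), Function.update_of_ne (fun hh => hei m' hh.symm),
      Function.update_of_ne (fun hh => hej m' hh.symm)]
    refine congrArg f (congrArg _ (funext fun m => ?_))
    by_cases hmm : m = m'
    · subst hmm
      rw [Function.update_self, Function.update_self]
    · rw [Function.update_of_ne (fun hh => hmm (heinj hh)) _ _,
        Function.update_of_ne hmm _ _]
  -- split the sum over p
  have himg : (Finset.univ : Finset (Fin k)).image e = Finset.univ \ {i, j} := by
    ext p
    simp only [Finset.mem_image, Finset.mem_univ, true_and, Finset.mem_sdiff,
      Finset.mem_insert, Finset.mem_singleton]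
    constructor
    · rintro ⟨m, rfl⟩
      push_neg
      exact ⟨hei m, hej m⟩
    · intro hp
      push_neg at hp
      obtain ⟨q, hq⟩ := Fin.exists_succAbove_eq (hp.2 : p ≠ j)
      have hqqi : q ≠ qi := by
        intro hh; rw [hh, hsal] at hq; exact hp.1 hq.symm
      obtain ⟨m, hm⟩ := Fin.exists_succAbove_eq hqqi
      exact ⟨m, by rw [he]; simp only [hm, hq]⟩
  have hsplit : ∑ p : Fin (k + 2),
        f (dtup (k + 1) (Function.update y p (hAct h n hc x (y p))) i j)
      = (∑ p ∈ Finset.univ \ {i, j},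
          f (dtup (k + 1) (Function.update y p (hAct h n hc x (y p))) i j))
        + (f (dtup (k + 1) (Function.update y i (hAct h n hc x (y i))) i j)
          + f (dtup (k + 1) (Function.update y j (hAct h n hc x (y j))) i j)) := by
    rw [← Finset.sum_sdiff (Finset.subset_univ ({i, j} : Finset (Fin (k + 2)))),
      Finset.sum_pair hine]
  have hcompl : ∑ p ∈ Finset.univ \ {i, j},
        f (dtup (k + 1) (Function.update y p (hAct h n hc x (y p))) i j)
      = ∑ m' : Fin k,
          f (Fin.cons ⁅y i, y j⁆ (Function.update tl m' (hAct h n hc x (tl m')))) := by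
    rw [← himg, Finset.sum_image (fun a _ b _ hab => heinj hab)]
    exact Finset.sum_congr rfl fun m' _ => hGe m'
  have hinv2 := hinv x hx (Fin.cons ⁅y i, y j⁆ tl)
  rw [Fin.sum_univ_succ] at hinv2
  simp only [Fin.cons_zero, Fin.cons_succ, Fin.update_cons_zero, ← Fin.cons_update] at hinv2
  -- combine
  rw [hsplit, hcompl, hGi, hGj]
  have hsum0 : ∑ m' : Fin k,
      f (Fin.cons ⁅y i, y j⁆ (Function.update tl m' (hAct h n hc x (tl m'))))
      = - f (Fin.cons (hAct h n hc x ⁅y i, y j⁆) tl) := by linear_combination hinv2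
  rw [hsum0]
  have hdefect := hAct_defect h n hc x (y i) (y j)
  have hstep : - f (Fin.cons (hAct h n hc x ⁅y i, y j⁆) tl)
        + (f (Fin.cons ⁅hAct h n hc x (y i), y j⁆ tl)
          + f (Fin.cons ⁅y i, hAct h n hc x (y j)⁆ tl))
      = f (Fin.cons (⁅hAct h n hc x (y i), y j⁆ + ⁅y i, hAct h n hc x (y j)⁆
            - hAct h n hc x ⁅y i, y j⁆) tl) := by
    rw [map_cons_sub, map_cons_add]
    ring
  rw [hstep, hdefect, map_cons_sub]
  rfl
end Main

/- STATEMENT 5: for `𝔩 = 𝔥 ⊕ 𝔫`, the subspace `(∧𝔫*)^𝔥` of `𝔥`-invariant elements of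
`∧𝔫*` is invariant under the Chevalley–Eilenberg coboundary operator `d_𝔫` of `𝔫`
(even though the action of `𝔥` on `𝔫` need not be by derivations): if `f ∈ ∧ᵏ𝔫*` is
`𝔥`-invariant then so is `d_𝔫 f`. -/
theorem ce_differential_preserves_h_invariants
    {K : Type*} [Field K] {L : Type*} [LieRing L] [LieAlgebra K L]
    (h n : LieSubalgebra K L)
    (hc : IsCompl h.toSubmodule n.toSubmodule)
    (k : ℕ) (f : AlternatingMap K n K (Fin k))
    -- `f` is `𝔥`-invariant
    (hinv : ∀ x ∈ h, ∀ y : Fin k → n,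
      ∑ i : Fin k, f (Function.update y i (hAct h n hc x (y i))) = 0) :
    -- `d_𝔫 f` is `𝔥`-invariant
    ∀ x ∈ h, ∀ y : Fin (k + 1) → n,
      ∑ i : Fin (k + 1),
        ceDiff K k (⇑f) (Function.update y i (hAct h n hc x (y i))) = 0 := by

  cases k with
  | zero =>
    intro x hx y
    simp [ceDiff_eq]
  | succ k =>
    intro x hx y
    set H : Fin (k + 2) → Fin (k + 1) → K := fun r q =>
      f (Function.update (fun t => y (r.succAbove t)) q
          (hAct h n hc (pH h n hc x (y r)) (y (r.succAbove q)))) with hH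
    have hH0 : ∀ r, ∑ q : Fin (k + 1), H r q = 0 := by
      intro r
      exact hinv (pH h n hc x (y r)) (pH_mem h n hc x (y r)) (fun t => y (r.succAbove t))
    have hmain : ∑ p : Fin (k + 2),
          ceDiff K (k + 1) (⇑f) (Function.update y p (hAct h n hc x (y p)))
        = ∑ i : Fin (k + 2), ∑ j : Fin (k + 2),
            (if hij : (i : ℕ) < (j : ℕ) then
              (-1 : K) ^ ((i : ℕ) + (j : ℕ)) *
                ((-1 : K) ^ (i : ℕ) * H j ⟨(i : ℕ), by have := j.isLt; omega⟩
                  - (-1 : K) ^ ((j : ℕ) - 1) * H i ⟨(j : ℕ) - 1, by have := j.isLt; omega⟩)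
             else 0) := by
      simp only [ceDiff_eq]
      rw [Finset.sum_comm]
      refine Finset.sum_congr rfl fun i _ => ?_
      rw [Finset.sum_comm]
      refine Finset.sum_congr rfl fun j _ => ?_
      by_cases hij : (i : ℕ) < (j : ℕ)
      · simp only [if_pos hij, dif_pos hij]
        rw [← Finset.mul_sum, pair_sum h n hc k f x hx hinv y i j hij]
        congr 1
        have hA : f (Fin.cons (hAct h n hc (pH h n hc x (y j)) (y i))
              ((⟨(i : ℕ), by have := j.isLt; omega⟩ : Fin (k + 1)).removeNth
                (fun q => y (j.succAbove q))))
            = (-1 : K) ^ (i : ℕ) * H j ⟨(i : ℕ), by have := j.isLt; omega⟩ := by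
          rw [map_cons_removeNth]
          rw [hH]
          simp only [Fin.val_mk]
          congr 2
          rw [succAbove_left i j hij]
        have hB : f (Fin.cons (hAct h n hc (pH h n hc x (y i)) (y j))
              ((⟨(i : ℕ), by have := j.isLt; omega⟩ : Fin (k + 1)).removeNth
                (fun q => y (j.succAbove q))))
            = (-1 : K) ^ ((j : ℕ) - 1) * H i ⟨(j : ℕ) - 1, by have := j.isLt; omega⟩ := by
          have hrm : ((⟨(i : ℕ), by have := j.isLt; omega⟩ : Fin (k + 1)).removeNth
                (fun q => y (j.succAbove q)))
              = ((⟨(j : ℕ) - 1, by have := j.isLt; omega⟩ : Fin (k + 1)).removeNth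
                (fun q => y (i.succAbove q))) := by
            funext m
            show y (j.succAbove ((⟨(i : ℕ), _⟩ : Fin (k + 1)).succAbove m))
              = y (i.succAbove ((⟨(j : ℕ) - 1, _⟩ : Fin (k + 1)).succAbove m))
            rw [← skip2F_eq_right i j hij m, ← skip2F_eq_left i j hij m]
          rw [hrm, map_cons_removeNth]
          rw [hH]
          simp only [Fin.val_mk]
          congr 2
          rw [succAbove_right i j hij]
        rw [hA, hB]
      · simp only [if_neg hij, dif_neg hij, Finset.sum_const_zero]
    rw [hmain]
    exact step3 k H hH0
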